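/- For any sequences of non-negative reals X_{t,i} (t = 1, ..., T; i = 1, ..., K) and any non-increasing positive sequence η_1 ≥ η_2 ≥ ... ≥ η_T > 0, defining q_{t,i} = exp(-η_t ∑_{s<t} X_{s,i}) / ∑_{j=1}^{K} exp(-η_t ∑_{s<t} X_{s,j}), we have ∑_{t=1}^{T} ∑_{i=1}^{K} q_{t,i} X_{t,i} - min_{k} ∑_{t=1}^{T} X_{t,k} ≤ (ln K)/η_T + ∑_{t=1}^{T} (η_t/2) ∑_{i=1}^{K} q_{t,i} X_{t,i}². -/

import Mathlib

open Finset

namespace ExpWeightsAux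

lemma exp_neg_le_quad {x : ℝ} (hx : 0 ≤ x) : Real.exp (-x) ≤ 1 - x + x ^ 2 / 2 := by
  have e1 := Real.quadratic_le_exp_of_nonneg hx
  have e2 : Real.exp (-x) * Real.exp x = 1 := by rw [← Real.exp_add]; simp
  have e3 : (0:ℝ) < Real.exp x := Real.exp_pos x
  have e4 : (0:ℝ) < Real.exp (-x) := Real.exp_pos _
  nlinarith [sq_nonneg x, sq_nonneg (x ^ 2), sq_nonneg (x - 1)]

/-- The potential function. -/
noncomputable def Phi (K : ℕ) (L : Fin K → ℝ) (a : ℝ) : ℝ :=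
  -(Real.log ((∑ i : Fin K, Real.exp (-a * L i)) / K)) / a

lemma sumexp_pos {K : ℕ} (hK : 1 ≤ K) (L : Fin K → ℝ) (a : ℝ) :
    0 < ∑ i : Fin K, Real.exp (-a * L i) := by
  have : Nonempty (Fin K) := Fin.pos_iff_nonempty.mp hK
  exact Finset.sum_pos (fun i _ => Real.exp_pos _) Finset.univ_nonempty

lemma Phi_zero {K : ℕ} (hK : 1 ≤ K) (a : ℝ) : Phi K (fun _ => 0) a = 0 := by
  have hK0 : (K:ℝ) ≠ 0 := by
    have : 0 < K := hK
    positivity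
  simp [Phi, div_self hK0]

lemma Phi_mono {K : ℕ} (hK : 1 ≤ K) (L : Fin K → ℝ) {a b : ℝ} (ha : 0 < a) (hab : a ≤ b) :
    Phi K L b ≤ Phi K L a := by
  have hb : 0 < b := lt_of_lt_of_le ha hab
  have hKpos : (0:ℝ) < K := by exact_mod_cast Nat.lt_of_lt_of_le Nat.zero_lt_one hK
  set p : ℝ := b / a with hp_def
  have hp : 1 ≤ p := (one_le_div ha).mpr hab
  have hw' : ∑ _i : Fin K, ((K:ℝ)⁻¹) = 1 := by
    simp [Finset.sum_const, Finset.card_univ, nsmul_eq_mul, mul_inv_cancel₀ hKpos.ne']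
  have key := Real.rpow_arith_mean_le_arith_mean_rpow Finset.univ
    (fun _ : Fin K => (K:ℝ)⁻¹) (fun i : Fin K => Real.exp (-a * L i))
    (fun i _ => by positivity) hw' (fun i _ => (Real.exp_pos _).le) hp
  have hz : ∀ i : Fin K, (Real.exp (-a * L i)) ^ p = Real.exp (-b * L i) := by
    intro i
    rw [← Real.exp_mul]
    congr 1
    rw [hp_def]
    field_simp [ha.ne']
  set A : ℝ := (∑ i : Fin K, Real.exp (-a * L i)) / K with hA_def
  set B : ℝ := (∑ i : Fin K, Real.exp (-b * L i)) / K with hB_def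
  have hA : 0 < A := div_pos (sumexp_pos hK L a) hKpos
  have hB : 0 < B := div_pos (sumexp_pos hK L b) hKpos
  have hwA : ∑ i : Fin K, ((K:ℝ)⁻¹) * Real.exp (-a * L i) = A := by
    rw [hA_def, div_eq_inv_mul, Finset.mul_sum]
  have hwB : ∑ i : Fin K, ((K:ℝ)⁻¹) * (Real.exp (-a * L i)) ^ p = B := by
    rw [hB_def, div_eq_inv_mul, Finset.mul_sum]
    exact Finset.sum_congr rfl fun i _ => by rw [hz i]
  rw [hwA, hwB] at key
  -- key : A ^ p ≤ B
  have hlog : p * Real.log A ≤ Real.log B := by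
    calc p * Real.log A = Real.log (A ^ p) := (Real.log_rpow hA p).symm
      _ ≤ Real.log B := Real.log_le_log (Real.rpow_pos_of_pos hA p) key
  have hpa : a * p = b := by rw [hp_def]; field_simp
  have h1 : a * (p * Real.log A) ≤ a * Real.log B :=
    mul_le_mul_of_nonneg_left hlog ha.le
  have h2 : a * (p * Real.log A) = b * Real.log A := by rw [← hpa]; ring
  have hgoal : -(Real.log B) * a ≤ -(Real.log A) * b := by nlinarith [h1, h2]
  rw [Phi, Phi, div_le_div_iff₀ hb ha, ← hA_def, ← hB_def]
  exact hgoal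

/-- Per-round inequality. -/
lemma per_round {K : ℕ} (hK : 1 ≤ K) (L x : Fin K → ℝ) (hx : ∀ i, 0 ≤ x i)
    {a : ℝ} (ha : 0 < a) :
    (∑ i : Fin K, (Real.exp (-a * L i) / ∑ j : Fin K, Real.exp (-a * L j)) * x i)
      - a / 2 * ∑ i : Fin K, (Real.exp (-a * L i) / ∑ j : Fin K, Real.exp (-a * L j)) * x i ^ 2
    ≤ Phi K (fun i => L i + x i) a - Phi K L a := by
  have hKpos : (0:ℝ) < K := by exact_mod_cast Nat.lt_of_lt_of_le Nat.zero_lt_one hK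
  set S : ℝ := ∑ j : Fin K, Real.exp (-a * L j) with hS_def
  set S' : ℝ := ∑ j : Fin K, Real.exp (-a * (L j + x j)) with hS'_def
  have hS : 0 < S := sumexp_pos hK L a
  have hS' : 0 < S' := sumexp_pos hK (fun i => L i + x i) a
  set q : Fin K → ℝ := fun i => Real.exp (-a * L i) / S with hq_def
  have hq_nonneg : ∀ i, 0 ≤ q i := fun i => div_nonneg (Real.exp_pos _).le hS.le
  have hq_sum : ∑ i : Fin K, q i = 1 := by
    rw [hq_def, ← Finset.sum_div, ← hS_def, div_self hS.ne']
  -- S'/S = ∑ q i * exp (-a * x i)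
  have hratio : S' / S = ∑ i : Fin K, q i * Real.exp (-a * x i) := by
    rw [hS'_def, Finset.sum_div]
    refine Finset.sum_congr rfl fun i _ => ?_
    rw [hq_def]
    rw [div_mul_eq_mul_div, ← Real.exp_add]
    congr 2
    ring
  set u : ℝ := ∑ i : Fin K, q i * x i with hu_def
  set v : ℝ := ∑ i : Fin K, q i * x i ^ 2 with hv_def
  have hbound : S' / S ≤ 1 - a * u + a ^ 2 / 2 * v := by
    rw [hratio]
    have : ∀ i : Fin K, q i * Real.exp (-a * x i)
        ≤ q i * (1 - a * x i + (a * x i) ^ 2 / 2) := by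
      intro i
      refine mul_le_mul_of_nonneg_left ?_ (hq_nonneg i)
      have := exp_neg_le_quad (x := a * x i) (mul_nonneg ha.le (hx i))
      rw [neg_mul]
      exact this
    calc (∑ i : Fin K, q i * Real.exp (-a * x i))
        ≤ ∑ i : Fin K, q i * (1 - a * x i + (a * x i) ^ 2 / 2) :=
          Finset.sum_le_sum fun i _ => this i
      _ = 1 - a * u + a ^ 2 / 2 * v := by
          have expand : (∑ i : Fin K, q i * (1 - a * x i + (a * x i) ^ 2 / 2))
              = (∑ i : Fin K, q i) - a * u + a ^ 2 / 2 * v := by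
            rw [hu_def, hv_def, Finset.mul_sum, Finset.mul_sum, ← Finset.sum_sub_distrib,
              ← Finset.sum_add_distrib]
            exact Finset.sum_congr rfl fun i _ => by ring
          rw [expand, hq_sum]
  have hlog1 : Real.log (S' / S) ≤ S' / S - 1 :=
    Real.log_le_sub_one_of_pos (div_pos hS' hS)
  have hPhiDiff : Phi K (fun i => L i + x i) a - Phi K L a = -(Real.log (S' / S)) / a := by
    rw [Phi, Phi, ← hS_def, ← hS'_def]
    rw [Real.log_div hS'.ne' hS.ne',
      Real.log_div hS'.ne' hKpos.ne', Real.log_div hS.ne' hKpos.ne']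
    ring
  rw [hPhiDiff, le_div_iff₀ ha]
  nlinarith [hbound, hlog1]

lemma Phi_le_min {K : ℕ} (hK : 1 ≤ K) (L : Fin K → ℝ) {a : ℝ} (ha : 0 < a) (k : Fin K) :
    Phi K L a ≤ L k + Real.log K / a := by
  have hKpos : (0:ℝ) < K := by exact_mod_cast Nat.lt_of_lt_of_le Nat.zero_lt_one hK
  have hS : 0 < ∑ i : Fin K, Real.exp (-a * L i) := sumexp_pos hK L a
  have hsingle : Real.exp (-a * L k) ≤ ∑ i : Fin K, Real.exp (-a * L i) :=
    Finset.single_le_sum (f := fun i => Real.exp (-a * L i))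
      (fun i _ => (Real.exp_pos _).le) (Finset.mem_univ k)
  have hlog : -a * L k - Real.log K ≤ Real.log ((∑ i : Fin K, Real.exp (-a * L i)) / K) := by
    rw [Real.log_div hS.ne' hKpos.ne']
    have : -a * L k ≤ Real.log (∑ i : Fin K, Real.exp (-a * L i)) := by
      calc -a * L k = Real.log (Real.exp (-a * L k)) := (Real.log_exp _).symm
        _ ≤ _ := Real.log_le_log (Real.exp_pos _) hsingle
    linarith
  rw [Phi, div_le_iff₀ ha]
  have h2 : (L k + Real.log K / a) * a = L k * a + Real.log K := by field_simp
  nlinarith [hlog]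

end ExpWeightsAux

/-- Regret bound for exponential weights with a time-varying non-increasing learning
rate (Lemma 7 of Seldin–Slivkins): for non-negative `X_{t,i}` and
`q_{t,i} = exp(-η_t ∑_{s<t} X_{s,i}) / ∑_j exp(-η_t ∑_{s<t} X_{s,j})`,
`∑_t ∑_i q_{t,i} X_{t,i} - min_k ∑_t X_{t,k}
  ≤ (ln K)/η_T + ∑_t (η_t/2) ∑_i q_{t,i} X_{t,i}²`. -/
theorem exp_weights_regret (K T : ℕ) (hK : 1 ≤ K) (hT : 1 ≤ T)
    (X : ℕ → Fin K → ℝ) (hX : ∀ t i, 0 ≤ X t i)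
    (η : ℕ → ℝ) (hpos : ∀ t ∈ Finset.Icc 1 T, 0 < η t)
    (hmono : ∀ s t, 1 ≤ s → s ≤ t → t ≤ T → η t ≤ η s) :
    (∑ t ∈ Finset.Icc 1 T, ∑ i : Fin K,
        (Real.exp (-η t * ∑ s ∈ Finset.Ico 1 t, X s i) /
          ∑ j : Fin K, Real.exp (-η t * ∑ s ∈ Finset.Ico 1 t, X s j)) * X t i)
      - Finset.inf' Finset.univ ⟨⟨0, hK⟩, Finset.mem_univ _⟩
          (fun k : Fin K => ∑ t ∈ Finset.Icc 1 T, X t k)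
    ≤ Real.log K / η T +
      ∑ t ∈ Finset.Icc 1 T, (η t / 2) * ∑ i : Fin K,
        (Real.exp (-η t * ∑ s ∈ Finset.Ico 1 t, X s i) /
          ∑ j : Fin K, Real.exp (-η t * ∑ s ∈ Finset.Ico 1 t, X s j)) * (X t i) ^ 2 := by
  classical
  open ExpWeightsAux in
  -- cumulative losses
  set L : ℕ → Fin K → ℝ := fun t i => ∑ s ∈ Finset.Ico 1 t, X s i with hL_def
  have hLsucc : ∀ t, 1 ≤ t → (L (t + 1)) = fun i => L t i + X t i := by
    intro t ht
    funext i
    simp only [hL_def]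
    exact Finset.sum_Ico_succ_top ht (fun s => X s i)
  have hL1 : L 1 = fun _ => 0 := by
    funext i; simp [hL_def]
  -- per-round terms
  set G : ℕ → ℝ := fun t => ∑ i : Fin K,
    (Real.exp (-η t * L t i) / ∑ j : Fin K, Real.exp (-η t * L t j)) * X t i with hG_def
  set H : ℕ → ℝ := fun t => ∑ i : Fin K,
    (Real.exp (-η t * L t i) / ∑ j : Fin K, Real.exp (-η t * L t j)) * X t i ^ 2 with hH_def
  have hround : ∀ t, 1 ≤ t → t ≤ T →
      G t - η t / 2 * H t ≤ Phi K (L (t + 1)) (η t) - Phi K (L t) (η t) := by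
    intro t ht htT
    have := per_round (K := K) hK (L t) (X t) (fun i => hX t i)
      (hpos t (Finset.mem_Icc.mpr ⟨ht, htT⟩))
    rw [← hLsucc t ht] at this
    exact this
  -- key induction
  have key : ∀ n, 1 ≤ n → n ≤ T →
      ∑ t ∈ Finset.Icc 1 n, (G t - η t / 2 * H t) ≤ Phi K (L (n + 1)) (η n) := by
    intro n
    induction n with
    | zero => intro h; omega
    | succ n ih =>
      intro _ hnT
      rcases Nat.eq_zero_or_pos n with hn0 | hn1
      · subst hn0
        rw [Finset.Icc_self, Finset.sum_singleton]
        have h1 := hround 1 le_rfl (by omega)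
        rw [hL1, Phi_zero hK] at h1
        linarith
      · have hnT' : n ≤ T := by omega
        have ihn := ih hn1 hnT'
        rw [Finset.sum_Icc_succ_top (by omega : 1 ≤ n + 1)]
        have hstep := hround (n + 1) (by omega) hnT
        have hmonoPhi : Phi K (L (n + 1)) (η n) ≤ Phi K (L (n + 1)) (η (n + 1)) :=
          Phi_mono hK (L (n + 1)) (hpos (n + 1) (Finset.mem_Icc.mpr ⟨by omega, hnT⟩))
            (hmono n (n + 1) hn1 (by omega) hnT)
        linarith
  have keyT := key T hT le_rfl
  -- split the sum
  have hsplit : ∑ t ∈ Finset.Icc 1 T, (G t - η t / 2 * H t)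
      = (∑ t ∈ Finset.Icc 1 T, G t) - ∑ t ∈ Finset.Icc 1 T, η t / 2 * H t :=
    Finset.sum_sub_distrib _ _
  -- the minimizer
  obtain ⟨k₀, -, hk₀⟩ := Finset.exists_mem_eq_inf' (s := (Finset.univ : Finset (Fin K)))
    ⟨⟨0, hK⟩, Finset.mem_univ _⟩ (fun k : Fin K => ∑ t ∈ Finset.Icc 1 T, X t k)
  have hfin : Phi K (L (T + 1)) (η T)
      ≤ (∑ t ∈ Finset.Icc 1 T, X t k₀) + Real.log K / η T := by
    have := Phi_le_min (K := K) hK (L (T + 1))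
      (hpos T (Finset.mem_Icc.mpr ⟨hT, le_rfl⟩)) k₀
    have hLT : L (T + 1) k₀ = ∑ t ∈ Finset.Icc 1 T, X t k₀ := by
      simp only [hL_def]
      rw [Finset.Ico_add_one_right_eq_Icc]
    rw [hLT] at this
    exact this
  rw [hk₀]
  have : (∑ t ∈ Finset.Icc 1 T, G t) - (∑ t ∈ Finset.Icc 1 T, X t k₀)
      ≤ Real.log K / η T + ∑ t ∈ Finset.Icc 1 T, η t / 2 * H t := by
    rw [hsplit] at keyT
    linarith
  exact this
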